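/- On a compact metric space X, hypo-convergence of a sequence of upper semi-continuous functions f_n to an upper semi-continuous function f is equivalent to convergence of their hypographs in the Hausdorff metric on closed subsets of X × ℝ. -/
import Mathlib


open Filter Set Topology Metric

noncomputable section

/-- Hypograph of a real-valued function. -/
def hypo {X : Type*} (f : X → ℝ) : Set (X × ℝ) := {z | z.2 ≤ f z.1}

/-- Painlevé–Kuratowski lower limit of a sequence of sets. -/
def Li {Y : Type*} [TopologicalSpace Y] (A : ℕ → Set Y) : Set Y :=
  {a | ∃ u : ℕ → Y, Tendsto u atTop (nhds a) ∧ ∀ᶠ n in atTop, u n ∈ A n}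

/-- Painlevé–Kuratowski upper limit of a sequence of sets. -/
def Ls {Y : Type*} [TopologicalSpace Y] (A : ℕ → Set Y) : Set Y :=
  {a | ∃ φ : ℕ → ℕ, StrictMono φ ∧ ∃ u : ℕ → Y, (∀ k, u k ∈ A (φ k)) ∧
    Tendsto u atTop (nhds a)}

/-- Hypo-convergence: Painlevé–Kuratowski convergence of hypographs. -/
def HypoConv {X : Type*} [TopologicalSpace X] (fn : ℕ → X → ℝ) (f : X → ℝ) : Prop :=
  Li (fun n => hypo (fn n)) = hypo f ∧ Ls (fun n => hypo (fn n)) = hypo f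

lemma hypo_isClosed {X : Type*} [TopologicalSpace X] {f : X → ℝ}
    (hf : UpperSemicontinuous f) : IsClosed (hypo f) := by
  rw [← isOpen_compl_iff, isOpen_iff_mem_nhds]
  rintro ⟨x, t⟩ hz
  simp only [mem_compl_iff, hypo, mem_setOf_eq, not_le] at hz
  obtain ⟨c, hc1, hc2⟩ := exists_between hz
  refine mem_of_superset
    (prod_mem_nhds ((hf.isOpen_preimage c).mem_nhds hc1) (Ioi_mem_nhds hc2)) ?_
  rintro ⟨y, s⟩ ⟨hy, hs⟩
  simp only [mem_compl_iff, hypo, mem_setOf_eq, not_le]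
  exact lt_trans (mem_Iio.1 hy) (mem_Ioi.1 hs)

lemma hypo_nonempty {X : Type*} [Nonempty X] (f : X → ℝ) : (hypo f).Nonempty := by
  obtain ⟨x⟩ := ‹Nonempty X›
  exact ⟨(x, f x), show f x ≤ f x from le_refl _⟩

lemma usc_exists_max {X : Type*} [TopologicalSpace X] [CompactSpace X] [Nonempty X]
    {f : X → ℝ} (hf : UpperSemicontinuous f) : ∃ x₀, ∀ x, f x ≤ f x₀ := by
  by_contra h
  push_neg at h
  obtain ⟨t, ht⟩ := IsCompact.elim_finite_subcover isCompact_univ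
      (fun x : X => f ⁻¹' Iio (f x)) (fun x => hf.isOpen_preimage (f x))
      (by
        intro y _
        obtain ⟨x, hx⟩ := h y
        exact mem_iUnion.2 ⟨x, hx⟩)
  have htne : t.Nonempty := by
    obtain ⟨y⟩ := ‹Nonempty X›
    obtain ⟨x, hx, _⟩ := mem_iUnion₂.1 (ht (mem_univ y))
    exact ⟨x, hx⟩
  obtain ⟨x₀, hx₀t, hx₀⟩ := t.exists_max_image f htne
  obtain ⟨x, hxt, hxlt⟩ := mem_iUnion₂.1 (ht (mem_univ x₀))
  exact absurd (hx₀ x hxt) (not_le.2 hxlt)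

lemma hypo_mem_edist {X : Type*} [MetricSpace X] [CompactSpace X]
    (g h : X → ℝ) (b : X) (Mg : ℝ) (hMg : ∀ x, g x ≤ Mg) (c : ℝ)
    (hd : Metric.diam (univ : Set X) ≤ c) (hm : Mg - h b ≤ c) (hc0 : 0 ≤ c) :
    ∀ z ∈ hypo g, ∃ y ∈ hypo h, edist z y ≤ ENNReal.ofReal c := by
  rintro ⟨x, t⟩ hz
  refine ⟨(b, min t (h b)), show min t (h b) ≤ h b from min_le_right _ _, ?_⟩
  rw [edist_dist]
  apply ENNReal.ofReal_le_ofReal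
  rw [Prod.dist_eq]
  apply max_le
  · exact le_trans (dist_le_diam_of_mem isCompact_univ.isBounded (mem_univ x) (mem_univ b)) hd
  · rw [Real.dist_eq]
    have hzt : t ≤ g x := hz
    rcases min_cases t (h b) with ⟨he, _⟩ | ⟨he, hlt⟩ <;> rw [he]
    · simpa using hc0
    · rw [abs_of_nonneg (by linarith)]
      have := hMg x
      linarith

lemma hypo_edist_ne_top {X : Type*} [MetricSpace X] [CompactSpace X] [Nonempty X]
    {g h : X → ℝ} (hg : UpperSemicontinuous g) (hh : UpperSemicontinuous h) :
    EMetric.hausdorffEdist (hypo g) (hypo h) ≠ ⊤ := by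
  obtain ⟨a, ha⟩ := usc_exists_max hg
  obtain ⟨b, hb⟩ := usc_exists_max hh
  have h1 : (0:ℝ) ≤ |g a| := abs_nonneg _
  have h2 : (0:ℝ) ≤ |h b| := abs_nonneg _
  have h3 : g a ≤ |g a| := le_abs_self _
  have h4 : h b ≤ |h b| := le_abs_self _
  have h5 : -|h b| ≤ h b := neg_abs_le _
  have h6 : -|g a| ≤ g a := neg_abs_le _
  have hdiam : (0:ℝ) ≤ Metric.diam (univ : Set X) := Metric.diam_nonneg
  refine ne_top_of_le_ne_top
    (by simp : (ENNReal.ofReal (Metric.diam (univ : Set X) + (|g a| + |h b|))) ≠ ⊤)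
    (EMetric.hausdorffEdist_le_of_mem_edist ?_ ?_)
  · exact hypo_mem_edist g h b (g a) ha _ (by linarith) (by linarith) (by linarith)
  · exact hypo_mem_edist h g a (h b) hb _ (by linarith) (by linarith) (by linarith)

lemma Li_subset_Ls {Y : Type*} [TopologicalSpace Y] (A : ℕ → Set Y) : Li A ⊆ Ls A := by
  rintro z ⟨u, hu, hev⟩
  obtain ⟨N, hN⟩ := eventually_atTop.1 hev
  exact ⟨fun k => k + N, strictMono_id.add_const N, fun k => u (k + N),
    fun k => hN _ (Nat.le_add_left N k), hu.comp (tendsto_add_atTop_nat N)⟩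

lemma backward_dir {X : Type*} [MetricSpace X] [CompactSpace X] [Nonempty X]
    (fn : ℕ → X → ℝ) (f : X → ℝ)
    (hfn : ∀ n, UpperSemicontinuous (fn n)) (hf : UpperSemicontinuous f)
    (hT : Tendsto (fun n => hausdorffDist (hypo (fn n)) (hypo f)) atTop (nhds 0)) :
    HypoConv fn f := by
  have fin : ∀ n, EMetric.hausdorffEdist (hypo (fn n)) (hypo f) ≠ ⊤ :=
    fun n => hypo_edist_ne_top (hfn n) hf
  have claim1 : Ls (fun n => hypo (fn n)) ⊆ hypo f := by
    rintro z ⟨φ, hφ, u, hu, hconv⟩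
    have hd : ∀ k, infDist z (hypo f) ≤ dist z (u k) +
        hausdorffDist (hypo (fn (φ k))) (hypo f) := by
      intro k
      calc infDist z (hypo f) ≤ infDist (u k) (hypo f) + dist z (u k) :=
            infDist_le_infDist_add_dist
        _ ≤ dist z (u k) + hausdorffDist (hypo (fn (φ k))) (hypo f) := by
            rw [add_comm]
            have := infDist_le_hausdorffDist_of_mem (hu k) (fin (φ k))
            linarith
    have htend : Tendsto (fun k => dist z (u k) +
        hausdorffDist (hypo (fn (φ k))) (hypo f)) atTop (nhds 0) := by
      have h1 : Tendsto (fun k => dist z (u k)) atTop (nhds 0) := by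
        have := tendsto_iff_dist_tendsto_zero.1 hconv
        simpa [dist_comm] using this
      have h2 := hT.comp hφ.tendsto_atTop
      simpa using h1.add h2
    have hle : infDist z (hypo f) ≤ 0 := ge_of_tendsto' htend hd
    have : infDist z (hypo f) = 0 := le_antisymm hle infDist_nonneg
    exact ((hypo_isClosed hf).mem_iff_infDist_zero (hypo_nonempty f)).2 this
  have claim2 : hypo f ⊆ Li (fun n => hypo (fn n)) := by
    intro z hz
    have hch : ∀ n : ℕ, ∃ w ∈ hypo (fn n), dist z w < infDist z (hypo (fn n)) + 1/(n+1) := by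
      intro n
      refine (infDist_lt_iff (hypo_nonempty _)).1 ?_
      have : (0:ℝ) < 1/(n+1) := by positivity
      linarith
    choose u hu hud using hch
    refine ⟨u, ?_, Eventually.of_forall hu⟩
    rw [tendsto_iff_dist_tendsto_zero]
    refine squeeze_zero (fun n => dist_nonneg)
      (g := fun n => hausdorffDist (hypo (fn n)) (hypo f) + 1/(n+1)) (fun n => ?_) ?_
    · have h1 : infDist z (hypo (fn n)) ≤ hausdorffDist (hypo (fn n)) (hypo f) := by
        have := infDist_le_hausdorffDist_of_mem hz
          (by rw [EMetric.hausdorffEdist_comm]; exact fin n)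
        rwa [hausdorffDist_comm] at this
      have := hud n
      rw [dist_comm]
      linarith
    · have := hT.add (tendsto_one_div_add_atTop_nhds_zero_nat)
      simpa using this
  exact ⟨Subset.antisymm ((Li_subset_Ls _).trans claim1) claim2,
         Subset.antisymm claim1 (claim2.trans (Li_subset_Ls _))⟩

lemma forward_partA {X : Type*} [MetricSpace X] [CompactSpace X] [Nonempty X]
    (fn : ℕ → X → ℝ) (f : X → ℝ) (hf : UpperSemicontinuous f)
    (hLi : hypo f ⊆ Li (fun n => hypo (fn n))) :
    ∀ ε > 0, ∀ᶠ n in atTop, ∀ z ∈ hypo f, infDist z (hypo (fn n)) ≤ ε := by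
  intro ε hε
  have key : ∀ x : X, ∃ N : ℕ, ∀ n ≥ N, ∃ y : X, dist x y < ε/2 ∧ f x - ε/2 < fn n y := by
    intro x
    obtain ⟨u, hu, huA⟩ := hLi (show (x, f x) ∈ hypo f from le_refl (f x))
    obtain ⟨N1, hN1⟩ := (Metric.tendsto_atTop.1 hu) (ε/2) (by linarith)
    obtain ⟨N2, hN2⟩ := eventually_atTop.1 huA
    refine ⟨max N1 N2, fun n hn => ⟨(u n).1, ?_, ?_⟩⟩
    · have h1 := hN1 n (le_trans (le_max_left _ _) hn)
      rw [Prod.dist_eq] at h1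
      have := lt_of_le_of_lt (le_max_left (dist (u n).1 x) (dist (u n).2 (f x))) h1
      rwa [dist_comm] at this
    · have h1 := hN1 n (le_trans (le_max_left _ _) hn)
      rw [Prod.dist_eq] at h1
      have h2 := lt_of_le_of_lt (le_max_right (dist (u n).1 x) (dist (u n).2 (f x))) h1
      rw [Real.dist_eq, abs_sub_lt_iff] at h2
      have h3 : (u n).2 ≤ fn n (u n).1 := hN2 n (le_trans (le_max_right _ _) hn)
      linarith [h2.2]
  choose N hN using key
  obtain ⟨t, ht⟩ := IsCompact.elim_finite_subcover isCompact_univ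
      (fun x : X => f ⁻¹' Iio (f x + ε/2) ∩ ball x (ε/2))
      (fun x => ((hf.isOpen_preimage _).inter isOpen_ball))
      (fun y _ => mem_iUnion.2 ⟨y, ⟨show f y < f y + ε/2 by linarith,
        mem_ball_self (by linarith)⟩⟩)
  refine eventually_atTop.2 ⟨t.sup N, fun n hn => ?_⟩
  rintro ⟨x', s⟩ hz
  obtain ⟨xi, hxi, hflt, hball⟩ := mem_iUnion₂.1 (ht (mem_univ x'))
  obtain ⟨y, hy1, hy2⟩ := hN xi n (le_trans (Finset.le_sup hxi) hn)
  refine le_trans (infDist_le_dist_of_mem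
    (show (y, min s (fn n y)) ∈ hypo (fn n) from min_le_right s (fn n y))) ?_
  rw [Prod.dist_eq]
  have hsx : s ≤ f x' := hz
  have hflt' : f x' < f xi + ε/2 := hflt
  apply max_le
  · have hb : dist x' xi < ε/2 := mem_ball.1 hball
    calc dist x' y ≤ dist x' xi + dist xi y := dist_triangle _ _ _
      _ ≤ ε := by linarith
  · rw [Real.dist_eq]
    rcases min_cases s (fn n y) with ⟨he, _⟩ | ⟨he, hle⟩ <;> rw [he]
    · simpa using le_of_lt hε
    · rw [abs_of_nonneg (by linarith)]
      linarith

lemma forward_partB {X : Type*} [MetricSpace X] [CompactSpace X] [Nonempty X]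
    (fn : ℕ → X → ℝ) (f : X → ℝ) (hf : UpperSemicontinuous f)
    (hLs : Ls (fun n => hypo (fn n)) ⊆ hypo f) :
    ∀ ε > 0, ∀ᶠ n in atTop, ∀ z ∈ hypo (fn n), infDist z (hypo f) ≤ ε := by
  obtain ⟨a, ha⟩ := usc_exists_max hf
  set M := f a with hM
  intro ε hε
  by_contra hcon
  rw [Filter.not_eventually] at hcon
  have hfreq : ∃ᶠ n in atTop, ∃ z ∈ hypo (fn n), ε < infDist z (hypo f) := by
    refine hcon.mono fun n hn => ?_
    push_neg at hn
    exact hn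
  obtain ⟨φ, hφ, hP⟩ := Filter.extraction_of_frequently_atTop hfreq
  choose z hz hzd using hP
  set w : ℕ → X × ℝ := fun k => ((z k).1, min (z k).2 (M + ε)) with hw'
  have hw : ∀ k, w k ∈ hypo (fn (φ k)) :=
    fun k => show min (z k).2 (M + ε) ≤ fn (φ k) (z k).1 from
      le_trans (min_le_left (z k).2 (M + ε)) (hz k)
  have hwinf : ∀ k, ε ≤ infDist (w k) (hypo f) := by
    intro k
    rcases le_or_gt (z k).2 (M + ε) with hle | hlt
    · have hzk : w k = z k := by
        show ((z k).1, min (z k).2 (M + ε)) = z k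
        rw [min_eq_left hle]
      rw [hzk]
      exact (hzd k).le
    · by_contra hc
      push_neg at hc
      obtain ⟨⟨y, s⟩, hys, hdlt⟩ := (infDist_lt_iff (hypo_nonempty f)).1 hc
      have h2 : dist (w k).2 s ≤ dist (w k) (y, s) := by
        rw [Prod.dist_eq]; exact le_max_right _ _
      have hwk2 : (w k).2 = M + ε := by
        show min (z k).2 (M + ε) = M + ε
        rw [min_eq_right hlt.le]
      have hsy : s ≤ f y := hys
      have hfyM : f y ≤ M := ha y
      have : ε ≤ dist (w k).2 s := by
        rw [hwk2, Real.dist_eq, abs_of_nonneg (by linarith)]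
        linarith
      linarith [lt_of_le_of_lt (this.trans h2) hdlt]
  obtain ⟨xb, -, σ, hσ, hxc⟩ := isCompact_univ.tendsto_subseq
    (x := fun k => (w k).1) (fun k => mem_univ _)
  have hev : ∀ᶠ k in atTop, f xb + ε ≤ (w (σ k)).2 := by
    filter_upwards [hxc (Metric.ball_mem_nhds xb hε)] with k hk
    have hdk : dist ((w (σ k)).1) xb < ε := mem_ball.1 hk
    by_contra hc
    push_neg at hc
    have hmem : ((xb, min (f xb) ((w (σ k)).2)) : X × ℝ) ∈ hypo f := min_le_left (f xb) ((w (σ k)).2)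
    have hdd : dist (w (σ k)) (xb, min (f xb) ((w (σ k)).2)) < ε := by
      rw [Prod.dist_eq]
      apply max_lt hdk
      rw [Real.dist_eq]
      rcases min_cases (f xb) ((w (σ k)).2) with ⟨he, hle⟩ | ⟨he, _⟩ <;> rw [he]
      · rw [abs_of_nonneg (by linarith)]; linarith
      · simpa using hε
    exact absurd (lt_of_le_of_lt ((hwinf (σ k)).trans (infDist_le_dist_of_mem hmem)) hdd)
      (lt_irrefl ε)
  obtain ⟨Nl, hNl⟩ := eventually_atTop.1 hev
  have hub : ∀ k, (w k).2 ≤ M + ε := fun k => min_le_right _ _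
  have hv : ∀ j : ℕ, (w (σ (j + Nl))).2 ∈ Icc (f xb + ε) (M + ε) :=
    fun j => ⟨hNl _ (Nat.le_add_left _ _), hub _⟩
  obtain ⟨tb, htb, ψ, hψ, hvc⟩ := isCompact_Icc.tendsto_subseq hv
  set τ : ℕ → ℕ := fun j => ψ j + Nl with hτ'
  have hτ : StrictMono τ := hψ.add_const Nl
  have hmemLs : ((xb, tb) : X × ℝ) ∈ Ls (fun n => hypo (fn n)) := by
    refine ⟨fun j => φ (σ (τ j)), hφ.comp (hσ.comp hτ), fun j => w (σ (τ j)),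
      fun j => hw _, ?_⟩
    have hfst : Tendsto (fun j => (w (σ (τ j))).1) atTop (nhds xb) :=
      hxc.comp hτ.tendsto_atTop
    have hsnd : Tendsto (fun j => (w (σ (τ j))).2) atTop (nhds tb) := hvc
    exact hfst.prodMk_nhds hsnd
  have h1 : tb ≤ f xb := hLs hmemLs
  have h2 : f xb + ε ≤ tb := htb.1
  linarith

/-- On a compact metric space, hypo-convergence of upper semi-continuous functions `f_n` to an
upper semi-continuous `f` is equivalent to the convergence of the hypographs in the Hausdorff
metric on closed subsets of `X × ℝ`. -/
theorem stmt3 {X : Type*} [MetricSpace X] [CompactSpace X]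
    (fn : ℕ → X → ℝ) (f : X → ℝ)
    (hfn : ∀ n, UpperSemicontinuous (fn n)) (hf : UpperSemicontinuous f) :
    HypoConv fn f ↔
      Tendsto (fun n => Metric.hausdorffDist (hypo (fn n)) (hypo f)) atTop (nhds 0) := by
  rcases isEmpty_or_nonempty X with hX | hX
  · constructor
    · intro _
      have h0 : ∀ n, Metric.hausdorffDist (hypo (fn n)) (hypo f) = 0 := by
        intro n
        rw [Set.eq_empty_of_isEmpty (hypo f), hausdorffDist_empty]
      simp only [h0]
      exact tendsto_const_nhds
    · intro _
      exact ⟨by rw [Set.eq_empty_of_isEmpty (Li fun n => hypo (fn n)),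
          Set.eq_empty_of_isEmpty (hypo f)],
        by rw [Set.eq_empty_of_isEmpty (Ls fun n => hypo (fn n)),
          Set.eq_empty_of_isEmpty (hypo f)]⟩
  · constructor
    · rintro ⟨hLi, hLs⟩
      rw [Metric.tendsto_atTop]
      intro ε hε
      obtain ⟨N1, h1⟩ := eventually_atTop.1 (forward_partA fn f hf hLi.ge (ε/2) (by linarith))
      obtain ⟨N2, h2⟩ := eventually_atTop.1 (forward_partB fn f hf hLs.le (ε/2) (by linarith))
      refine ⟨max N1 N2, fun n hn => ?_⟩
      have hd : Metric.hausdorffDist (hypo (fn n)) (hypo f) ≤ ε/2 :=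
        hausdorffDist_le_of_infDist (by linarith)
          (h2 n (le_trans (le_max_right _ _) hn))
          (h1 n (le_trans (le_max_left _ _) hn))
      rw [Real.dist_eq, sub_zero, abs_of_nonneg hausdorffDist_nonneg]
      linarith
    · exact backward_dir fn f hfn hf

end
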